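/- Let F be a d₂ × d₁ complex matrix with tr(F F*) = 1, let P_F = Σ_{i,j=1}^{d₁} E_{ij} ⊗ F E_{ij} F* (the rank-one orthogonal projection onto ψ_F = Σ_i e_i ⊗ F e_i), and let p ∈ M_{d₂}(ℂ) be an orthogonal projection with tr(p) = k. Then ‖(I_{d₁} ⊗ p) P_F (I_{d₁} ⊗ p)‖ = tr(p F F*), and consequently ‖(I_{d₁} ⊗ p) P_F (I_{d₁} ⊗ p)‖ ≤ g_k(F), the sum of the k largest eigenvalues of F F*. -/

import Mathlib

open scoped Kronecker ComplexOrder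
open Matrix

/-- The operator norm (largest singular value) of a complex matrix. -/
noncomputable def opNorm {m n : Type*} [Fintype m] [Fintype n] [DecidableEq n]
    (A : Matrix m n ℂ) : ℝ :=
  ‖LinearMap.toContinuousLinearMap (Matrix.toEuclideanLin A)‖

/-- The sum of the `k` largest values of a function on a finite index type. -/
noncomputable def sumKLargest {n : Type*} [Fintype n] (k : ℕ) (f : n → ℝ) : ℝ :=
  sSup {x | ∃ s : Finset n, s.card = k ∧ x = ∑ i ∈ s, f i}

/-- `gk k F` is the sum of the `k` largest eigenvalues of `F * Fᴴ`. -/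
noncomputable def gk {d₂ d₁ : ℕ} (k : ℕ) (F : Matrix (Fin d₂) (Fin d₁) ℂ) : ℝ :=
  sumKLargest k (Matrix.isHermitian_mul_conjTranspose_self F).eigenvalues

lemma opNorm_rank_one {n : Type*} [Fintype n] [DecidableEq n] (w : EuclideanSpace ℂ n) :
    opNorm (Matrix.of fun x y => w x * (starRingEnd ℂ) (w y)) = ‖w‖ ^ 2 := by
  set A : Matrix n n ℂ := Matrix.of fun x y => w x * (starRingEnd ℂ) (w y) with hA
  set T := LinearMap.toContinuousLinearMap (Matrix.toEuclideanLin A) with hT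
  have key : ∀ v : EuclideanSpace ℂ n, T v = (inner ℂ w v : ℂ) • w := by
    intro v
    ext r
    simp only [hT, LinearMap.coe_toContinuousLinearMap', Matrix.toEuclideanLin_apply]
    show (A *ᵥ (WithLp.equiv 2 (n → ℂ)) v) r = _
    simp only [Matrix.mulVec, dotProduct, hA, Matrix.of_apply, PiLp.smul_apply,
      smul_eq_mul, PiLp.inner_apply, RCLike.inner_apply]
    rw [Finset.sum_mul]
    refine Finset.sum_congr rfl fun y _ => ?_
    show w r * (starRingEnd ℂ) (w y) * v y = v y * (starRingEnd ℂ) (w y) * w r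
    ring
  refine le_antisymm ?_ ?_
  · refine ContinuousLinearMap.opNorm_le_bound T (sq_nonneg _) fun v => ?_
    rw [key]
    rw [norm_smul]
    calc ‖(inner ℂ w v : ℂ)‖ * ‖w‖ ≤ (‖w‖ * ‖v‖) * ‖w‖ := by
          gcongr; exact norm_inner_le_norm w v
      _ = ‖w‖ ^ 2 * ‖v‖ := by ring
  · rcases eq_or_ne w 0 with h | h
    · have : ‖w‖ ^ 2 = 0 := by rw [h]; simp
      rw [this]
      exact norm_nonneg T
    · have h0 : 0 < ‖w‖ := by
        simpa using norm_pos_iff.mpr h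
      have h1 := T.le_opNorm w
      rw [key, inner_self_eq_norm_sq_to_K, norm_smul] at h1
      simp only [norm_pow, RCLike.norm_ofReal, abs_norm] at h1
      exact le_of_mul_le_mul_right h1 h0

lemma kyfan {d : ℕ} (k : ℕ) (c lam : Fin d → ℝ) (hc0 : ∀ i, 0 ≤ c i) (hc1 : ∀ i, c i ≤ 1)
    (hsum : ∑ i, c i = k) :
    ∃ s : Finset (Fin d), s.card = k ∧ ∑ i, c i * lam i ≤ ∑ i ∈ s, lam i := by
  have hkd : k ≤ d := by
    have : (k : ℝ) ≤ d := by
      rw [← hsum]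
      calc ∑ i, c i ≤ ∑ _i : Fin d, (1 : ℝ) := Finset.sum_le_sum fun i _ => hc1 i
        _ = d := by simp
    exact_mod_cast this
  rcases Nat.eq_zero_or_pos k with hk0 | hkpos
  · subst hk0
    refine ⟨∅, rfl, ?_⟩
    have : ∀ i, c i = 0 := by
      intro i
      have := (Finset.sum_eq_zero_iff_of_nonneg (fun i _ => hc0 i)).mp (by simpa using hsum)
      exact this i (Finset.mem_univ i)
    simp [this]
  · -- choose s maximizing the sum among card-k subsets
    have hne : ((Finset.univ : Finset (Fin d)).powersetCard k).Nonempty := by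
      obtain ⟨t, _, ht⟩ := Finset.exists_subset_card_eq (s := (Finset.univ : Finset (Fin d)))
        (by simpa using hkd)
      exact ⟨t, by simp [Finset.mem_powersetCard, ht]⟩
    obtain ⟨s, hs_mem, hs_max⟩ := Finset.exists_max_image _ (fun s => ∑ i ∈ s, lam i) hne
    rw [Finset.mem_powersetCard] at hs_mem
    have hscard : s.card = k := hs_mem.2
    have hsne : s.Nonempty := Finset.card_pos.mp (hscard ▸ hkpos)
    obtain ⟨i₀, hi₀, hmin⟩ := Finset.exists_min_image s lam hsne
    set t := lam i₀ with ht
    have hB : ∀ j ∉ s, lam j ≤ t := by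
      intro j hj
      have hcard' : (insert j (s.erase i₀)).card = k := by
        rw [Finset.card_insert_of_notMem (fun h => hj (Finset.mem_of_mem_erase h)),
          Finset.card_erase_of_mem hi₀, hscard]
        omega
      have := hs_max (insert j (s.erase i₀)) (by simp [Finset.mem_powersetCard, hcard'])
      rw [Finset.sum_insert (fun h => hj (Finset.mem_of_mem_erase h)),
        Finset.sum_erase_eq_sub hi₀] at this
      linarith
    refine ⟨s, hscard, ?_⟩
    have hsplit : ∑ i, c i * lam i = ∑ i ∈ s, c i * lam i + ∑ i ∈ sᶜ, c i * lam i :=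
      (Finset.sum_add_sum_compl s _).symm
    have hA : ∑ i ∈ s, c i * lam i ≤ ∑ i ∈ s, (lam i - (1 - c i) * t) := by
      refine Finset.sum_le_sum fun i hi => ?_
      have h1 : t ≤ lam i := hmin i hi
      have h2 : 0 ≤ 1 - c i := by linarith [hc1 i]
      nlinarith
    have hBsum : ∑ i ∈ sᶜ, c i * lam i ≤ ∑ i ∈ sᶜ, c i * t := by
      refine Finset.sum_le_sum fun i hi => ?_
      have := hB i (by simpa using hi)
      nlinarith [hc0 i]
    have e1 : ∑ i ∈ s, (lam i - (1 - c i) * t)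
        = ∑ i ∈ s, lam i - (k - ∑ i ∈ s, c i) * t := by
      rw [Finset.sum_sub_distrib]
      congr 1
      rw [← Finset.sum_mul, Finset.sum_sub_distrib]
      simp [hscard]
    have e2 : ∑ i ∈ sᶜ, c i * t = (k - ∑ i ∈ s, c i) * t := by
      rw [← Finset.sum_mul]
      have : ∑ i ∈ s, c i + ∑ i ∈ sᶜ, c i = k := by
        rw [Finset.sum_add_sum_compl]; exact hsum
      congr 1
      linarith
    linarith

theorem norm_compress_rankOne_proj (d₁ d₂ k : ℕ)
    (F : Matrix (Fin d₂) (Fin d₁) ℂ) (hF : (F * Fᴴ).trace = 1)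
    (PF : Matrix (Fin d₁ × Fin d₂) (Fin d₁ × Fin d₂) ℂ)
    (hPF : PF = ∑ i : Fin d₁, ∑ j : Fin d₁,
      Matrix.single i j (1 : ℂ) ⊗ₖ (F * Matrix.single i j (1 : ℂ) * Fᴴ))
    (p : Matrix (Fin d₂) (Fin d₂) ℂ)
    (hp : p.IsHermitian) (hp2 : p * p = p) (hptr : p.trace = (k : ℂ))
    (Q : Matrix (Fin d₁ × Fin d₂) (Fin d₁ × Fin d₂) ℂ)
    (hQ : Q = ((1 : Matrix (Fin d₁) (Fin d₁) ℂ) ⊗ₖ p) * PF *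
      ((1 : Matrix (Fin d₁) (Fin d₁) ℂ) ⊗ₖ p)) :
    (opNorm Q : ℂ) = (p * (F * Fᴴ)).trace ∧ opNorm Q ≤ gk k F := by
  -- entries of PF
  have hPFe : ∀ z z' : Fin d₁ × Fin d₂,
      PF z z' = F z.2 z.1 * (starRingEnd ℂ) (F z'.2 z'.1) := by
    intro z z'
    rw [hPF]
    simp [Matrix.sum_apply, Matrix.kroneckerMap_apply, Matrix.single,
      Matrix.mul_apply, Matrix.conjTranspose_apply, ite_and, Finset.sum_ite_eq,
      Finset.sum_ite_eq', mul_ite, ite_mul, zero_mul, mul_zero]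
  -- the rank-one vector
  set w : EuclideanSpace ℂ (Fin d₁ × Fin d₂) := WithLp.toLp 2 (fun x => (p * F) x.2 x.1) with hw
  have hA : ∀ (x z' : Fin d₁ × Fin d₂),
      (((1 : Matrix (Fin d₁) (Fin d₁) ℂ) ⊗ₖ p) * PF) x z'
        = w x * (starRingEnd ℂ) (F z'.2 z'.1) := by
    intro x z'
    rw [Matrix.mul_apply, Fintype.sum_prod_type, Finset.sum_comm]
    simp only [Matrix.kroneckerMap_apply, Matrix.one_apply, hPFe, ite_mul, mul_ite,
      zero_mul, mul_zero, one_mul, Finset.sum_ite_eq, Finset.sum_ite_eq',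
      Finset.mem_univ, if_true]
    rw [hw]
    show _ = (∑ b, p x.2 b * F b x.1) * _
    rw [Finset.sum_mul]
    refine Finset.sum_congr rfl fun b _ => ?_
    ring
  have hQw : Q = Matrix.of fun x y => w x * (starRingEnd ℂ) (w y) := by
    rw [hQ]
    ext x y
    rw [Matrix.mul_apply, Fintype.sum_prod_type, Finset.sum_comm, Matrix.of_apply]
    simp only [hA, Matrix.kroneckerMap_apply, Matrix.one_apply, ite_mul, mul_ite,
      zero_mul, mul_zero, one_mul, Finset.sum_ite_eq, Finset.sum_ite_eq',
      Finset.mem_univ, if_true]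
    have : (starRingEnd ℂ) (w y) = ∑ b, (starRingEnd ℂ) (F b y.1) * p b y.2 := by
      rw [hw]
      show (starRingEnd ℂ) (∑ b, p y.2 b * F b y.1) = _
      rw [map_sum]
      refine Finset.sum_congr rfl fun b _ => ?_
      rw [_root_.map_mul,
        show (starRingEnd ℂ) (p y.2 b) = p b y.2 from hp.apply b y.2]
      ring
    rw [this, Finset.mul_sum]
    refine Finset.sum_congr rfl fun b _ => ?_
    ring
  have hQnorm : opNorm Q = ‖w‖ ^ 2 := by rw [hQw]; exact opNorm_rank_one w
  have hwsq : ‖w‖ ^ 2 = ∑ x : Fin d₁ × Fin d₂, ‖w x‖ ^ 2 := by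
    rw [EuclideanSpace.norm_eq, Real.sq_sqrt (by positivity)]
  -- trace identity, part 1
  have h1 : ((p * F) * (p * F)ᴴ).trace = (p * (F * Fᴴ)).trace := by
    rw [Matrix.conjTranspose_mul, hp.eq,
      show p * F * (Fᴴ * p) = p * (F * Fᴴ) * p from by
        rw [Matrix.mul_assoc p F (Fᴴ * p), ← Matrix.mul_assoc F Fᴴ p, ← Matrix.mul_assoc p (F * Fᴴ) p],
      Matrix.trace_mul_comm, ← mul_assoc, hp2]
  have h2 : ((p * F) * (p * F)ᴴ).trace = ((∑ x : Fin d₁ × Fin d₂, ‖w x‖ ^ 2 : ℝ) : ℂ) := by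
    rw [Matrix.trace]
    simp only [Matrix.diag_apply, Matrix.mul_apply, Matrix.conjTranspose_apply]
    rw [Fintype.sum_prod_type]
    push_cast
    rw [Finset.sum_comm]
    refine Finset.sum_congr rfl fun i _ => Finset.sum_congr rfl fun a _ => ?_
    rw [hw]
    show (p * F) a i * (starRingEnd ℂ) ((p * F) a i) = _
    rw [Complex.mul_conj]
    norm_cast
    rw [Complex.normSq_eq_norm_sq]
  have htrace1 : (p * (F * Fᴴ)).trace = ((‖w‖ ^ 2 : ℝ) : ℂ) := by
    rw [← h1, h2, hwsq]
  -- Part 2: spectral decomposition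
  have hH : (F * Fᴴ).IsHermitian := Matrix.isHermitian_mul_conjTranspose_self F
  set lam : Fin d₂ → ℝ := (Matrix.isHermitian_mul_conjTranspose_self F).eigenvalues with hlam
  set U : Matrix (Fin d₂) (Fin d₂) ℂ :=
    (Matrix.IsHermitian.eigenvectorUnitary hH : Matrix (Fin d₂) (Fin d₂) ℂ) with hU
  have hU1 : star U * U = 1 := (Matrix.IsHermitian.eigenvectorUnitary hH).2.1
  have hU2 : U * star U = 1 := (Matrix.IsHermitian.eigenvectorUnitary hH).2.2
  set q : Matrix (Fin d₂) (Fin d₂) ℂ := star U * p * U with hq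
  have hq2 : q * q = q := by
    have e : star U * p * U * (star U * p * U) = star U * (p * (U * star U) * p) * U := by
      simp only [Matrix.mul_assoc]
    rw [hq, e, hU2, mul_one, hp2]
  have hqH : q.IsHermitian := by
    show qᴴ = q
    rw [hq, Matrix.conjTranspose_mul, Matrix.conjTranspose_mul, hp.eq,
      Matrix.star_eq_conjTranspose, Matrix.conjTranspose_conjTranspose, Matrix.mul_assoc]
  set c : Fin d₂ → ℝ := fun i => (q i i).re with hc
  have hqdiag : ∀ i, q i i = ((c i : ℝ) : ℂ) ∧ 0 ≤ c i ∧ c i ≤ 1 := by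
    intro i
    have hdi : q i i = ((∑ j, Complex.normSq (q i j) : ℝ) : ℂ) := by
      conv_lhs => rw [← hq2]
      rw [Matrix.mul_apply]
      push_cast
      refine Finset.sum_congr rfl fun j _ => ?_
      rw [show q j i = (starRingEnd ℂ) (q i j) from by
        rw [← hqH.apply j i]; simp]
      rw [Complex.mul_conj]
    have hcval : c i = ∑ j, Complex.normSq (q i j) := by
      rw [hc]; simp only [hdi, Complex.ofReal_re]
    have h0 : 0 ≤ c i := by
      rw [hcval]
      exact Finset.sum_nonneg fun j _ => Complex.normSq_nonneg _
    have hself : Complex.normSq (q i i) = c i ^ 2 := by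
      rw [hdi, ← hcval]
      simp [Complex.normSq_ofReal, sq]
    have hle : Complex.normSq (q i i) ≤ ∑ j, Complex.normSq (q i j) :=
      Finset.single_le_sum (fun j _ => Complex.normSq_nonneg _) (Finset.mem_univ i)
    rw [hself, ← hcval] at hle
    refine ⟨by rw [hdi, ← hcval], h0, by nlinarith⟩
  have hcsum : ∑ i, c i = (k : ℝ) := by
    have htq : q.trace = p.trace := by
      rw [hq, Matrix.trace_mul_comm (star U * p) U, ← Matrix.mul_assoc, hU2, one_mul]
    have : q.trace = ((∑ i, c i : ℝ) : ℂ) := by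
      rw [Matrix.trace]
      push_cast
      exact Finset.sum_congr rfl fun i _ => (hqdiag i).1
    rw [htq, hptr] at this
    exact_mod_cast this.symm
  have htr2 : (p * (F * Fᴴ)).trace = ((∑ i, c i * lam i : ℝ) : ℂ) := by
    have hspec := hH.spectral_theorem
    calc (p * (F * Fᴴ)).trace
        = (p * (U * Matrix.diagonal (RCLike.ofReal ∘ lam) * star U)).trace := by
          rw [hspec, Unitary.conjStarAlgAut_apply]
      _ = ((p * (U * Matrix.diagonal (RCLike.ofReal ∘ lam))) * star U).trace := by
          rw [← Matrix.mul_assoc]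
      _ = (star U * (p * (U * Matrix.diagonal (RCLike.ofReal ∘ lam)))).trace := by
          rw [Matrix.trace_mul_comm]
      _ = (q * Matrix.diagonal (RCLike.ofReal ∘ lam)).trace := by
          rw [hq]; simp only [Matrix.mul_assoc]
      _ = ((∑ i, c i * lam i : ℝ) : ℂ) := by
          rw [Matrix.trace]
          push_cast
          refine Finset.sum_congr rfl fun i _ => ?_
          rw [Matrix.diag_apply, Matrix.mul_diagonal, (hqdiag i).1]
          push_cast
          rfl
  have hkey : ‖w‖ ^ 2 = ∑ i, c i * lam i := by
    have := htrace1.symm.trans htr2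
    exact_mod_cast this
  obtain ⟨s, hscard, hsle⟩ := kyfan k c lam (fun i => (hqdiag i).2.1)
    (fun i => (hqdiag i).2.2) hcsum
  have hbdd : BddAbove {x | ∃ s : Finset (Fin d₂), s.card = k ∧ x = ∑ i ∈ s, lam i} := by
    have he : {x | ∃ s : Finset (Fin d₂), s.card = k ∧ x = ∑ i ∈ s, lam i}
        = (fun s : Finset (Fin d₂) => ∑ i ∈ s, lam i) '' {s | s.card = k} := by
      ext x
      constructor
      · rintro ⟨s, h1, h2⟩; exact ⟨s, h1, h2.symm⟩
      · rintro ⟨s, h1, h2⟩; exact ⟨s, h1, h2.symm⟩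
    rw [he]
    exact ((Set.toFinite _).image _).bddAbove
  constructor
  · rw [hQnorm, htrace1]
  · rw [hQnorm, hkey]
    calc ∑ i, c i * lam i ≤ ∑ i ∈ s, lam i := hsle
      _ ≤ gk k F := le_csSup hbdd ⟨s, hscard, rfl⟩
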